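/- Let P, Q ∈ nCSP. If ⟦P⟧ = ⟦Q⟧ (as distributions over sCSP) then P =_prob Q. -/

import Mathlib

open Classical

noncomputable section

namespace PaperPCSP

/-! ### Finitely supported distributions as weight functions -/

/-- Weight functions on `X`; probability distributions are those satisfying `IsDist`. -/
abbrev Wt (X : Type) := X → ℝ

/-- The support of a weight function. -/
def dsupp {X : Type} (Δ : Wt X) : Set X := Function.support Δ

/-- `Δ` is a finitely supported probability distribution. -/
def IsDist {X : Type} (Δ : Wt X) : Prop :=
  (∀ x, 0 ≤ Δ x) ∧ (dsupp Δ).Finite ∧ ∑ᶠ x, Δ x = 1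

/-- The point distribution at `x`. -/
def dirac {X : Type} (x : X) : Wt X := fun y => if y = x then 1 else 0

/-- Pushforward of a weight function along a map. -/
def dmap {X Y : Type} (g : X → Y) (Δ : Wt X) : Wt Y :=
  fun y => ∑ᶠ x ∈ {x | g x = y}, Δ x

/-- Expected value of `f` under `Δ`. -/
def dexp {X : Type} (Δ : Wt X) (f : X → ℝ) : ℝ := ∑ᶠ x, Δ x * f x

/-! ### Syntax of pCSP -/

mutual
/-- Process terms of pCSP (over prefix alphabet `A`). -/
inductive PCSP (A : Type) : Type where
  | st : SCSP A → PCSP A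
  | pch : ℝ → PCSP A → PCSP A → PCSP A
/-- State-based process terms of pCSP. -/
inductive SCSP (A : Type) : Type where
  | nil : SCSP A
  | pre : A → PCSP A → SCSP A
  | ich : PCSP A → PCSP A → SCSP A
  | ech : SCSP A → SCSP A → SCSP A
  | par : Set A → SCSP A → SCSP A → SCSP A
end

mutual
/-- Well-formedness: all probabilistic choices have `p ∈ (0,1)`.  `pCSP` proper
consists of the well-formed terms. -/
inductive PWF : {A : Type} → PCSP A → Prop where
  | st {A} {s : SCSP A} : SWF s → PWF (.st s)
  | pch {A} {p : ℝ} {P Q : PCSP A} : 0 < p → p < 1 → PWF P → PWF Q → PWF (.pch p P Q)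
inductive SWF : {A : Type} → SCSP A → Prop where
  | nil {A} : SWF (SCSP.nil (A := A))
  | pre {A} {a : A} {P} : PWF P → SWF (.pre a P)
  | ich {A} {P Q : PCSP A} : PWF P → PWF Q → SWF (.ich P Q)
  | ech {A} {s t : SCSP A} : SWF s → SWF t → SWF (.ech s t)
  | par {A} {B : Set A} {s t : SCSP A} : SWF s → SWF t → SWF (.par B s t)
end

/-- Interpretation of process terms as distributions over state-based terms. -/
def PCSP.interp {A : Type} : PCSP A → Wt (SCSP A)
  | .st s => dirac s
  | .pch p P Q => fun t => p * P.interp t + (1 - p) * Q.interp t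

/-! ### Operational semantics -/

/-- The probabilistic labelled transition relation; `none` is the internal action τ. -/
inductive Step {A : Type} : SCSP A → Option A → Wt (SCSP A) → Prop where
  | pre (a : A) (P : PCSP A) : Step (.pre a P) (some a) P.interp
  | ichL (P Q : PCSP A) : Step (.ich P Q) none P.interp
  | ichR (P Q : PCSP A) : Step (.ich P Q) none Q.interp
  | echL {s₁ s₂ : SCSP A} {a : A} {Δ} :
      Step s₁ (some a) Δ → Step (.ech s₁ s₂) (some a) Δ
  | echR {s₁ s₂ : SCSP A} {a : A} {Δ} :
      Step s₂ (some a) Δ → Step (.ech s₁ s₂) (some a) Δ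
  | echTL {s₁ s₂ : SCSP A} {Δ} :
      Step s₁ none Δ → Step (.ech s₁ s₂) none (dmap (fun t => .ech t s₂) Δ)
  | echTR {s₁ s₂ : SCSP A} {Δ} :
      Step s₂ none Δ → Step (.ech s₁ s₂) none (dmap (fun t => .ech s₁ t) Δ)
  | parL {B : Set A} {s₁ s₂ : SCSP A} {α : Option A} {Δ} :
      Step s₁ α Δ → (∀ a, α = some a → a ∉ B) →
      Step (.par B s₁ s₂) α (dmap (fun t => .par B t s₂) Δ)
  | parR {B : Set A} {s₁ s₂ : SCSP A} {α : Option A} {Δ} :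
      Step s₂ α Δ → (∀ a, α = some a → a ∉ B) →
      Step (.par B s₁ s₂) α (dmap (fun t => .par B s₁ t) Δ)
  | parS {B : Set A} {s₁ s₂ : SCSP A} {a : A} {Δ₁ Δ₂} :
      a ∈ B → Step s₁ (some a) Δ₁ → Step s₂ (some a) Δ₂ →
      Step (.par B s₁ s₂) none
        (dmap (fun q : SCSP A × SCSP A => .par B q.1 q.2) (fun q => Δ₁ q.1 * Δ₂ q.2))

/-! ### Lifting relations to distributions, weak transitions -/

/-- Lifting of a state-vs-distribution relation to distributions. -/
def Lift {A : Type} (R : SCSP A → Wt (SCSP A) → Prop) (Δ Θ : Wt (SCSP A)) : Prop :=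
  ∃ (n : ℕ) (p : Fin n → ℝ) (s : Fin n → SCSP A) (Φ : Fin n → Wt (SCSP A)),
    (∀ i, 0 ≤ p i) ∧ (∑ i, p i = 1) ∧
    (Δ = fun t => ∑ i, p i * dirac (s i) t) ∧
    (∀ i, R (s i) (Φ i)) ∧
    (Θ = fun t => ∑ i, p i * Φ i t)

/-- The transition relation lifted to distributions. -/
def StepD {A : Type} (α : Option A) : Wt (SCSP A) → Wt (SCSP A) → Prop :=
  Lift (fun s Δ => Step s α Δ)

/-- `s --τ̂--> Δ` : a τ-step or staying put. -/
def stepTauHat {A : Type} (s : SCSP A) (Δ : Wt (SCSP A)) : Prop :=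
  Step s none Δ ∨ Δ = dirac s

/-- `==τ̂==>` : reflexive-transitive closure of the lifted `--τ̂-->`. -/
def TauStar {A : Type} : Wt (SCSP A) → Wt (SCSP A) → Prop :=
  Relation.ReflTransGen (Lift stepTauHat)

/-- `Δ ==â==> Θ` for a visible action `a`. -/
def WeakA {A : Type} (a : A) (Δ Θ : Wt (SCSP A)) : Prop :=
  ∃ Δ₁ Δ₂, TauStar Δ Δ₁ ∧ StepD (some a) Δ₁ Δ₂ ∧ TauStar Δ₂ Θ

/-- `Δ ==α̂==> Θ`, which is `==τ̂==>` when `α = τ`. -/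
def Weak {A : Type} : Option A → Wt (SCSP A) → Wt (SCSP A) → Prop
  | none => TauStar
  | some a => WeakA a

/-- `s ↛X` : the state `s` enables no action from `X ∪ {τ}`. -/
def SRefuses {A : Type} (s : SCSP A) (X : Set A) : Prop :=
  (∀ Δ, ¬ Step s none Δ) ∧ ∀ a ∈ X, ∀ Δ, ¬ Step s (some a) Δ

/-- `Δ ↛X` : every state in the support of `Δ` refuses `X`. -/
def DRefuses {A : Type} (Δ : Wt (SCSP A)) (X : Set A) : Prop :=
  ∀ s ∈ dsupp Δ, SRefuses s X

/-! ### Simulation and failure simulation -/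

/-- `R` is a simulation. -/
def IsSimulation {A : Type} (R : SCSP A → Wt (SCSP A) → Prop) : Prop :=
  ∀ s Θ α Δ, R s Θ → Step s α Δ → ∃ Θ', Weak α Θ Θ' ∧ Lift R Δ Θ'

/-- `R` is a failure simulation. -/
def IsFailureSim {A : Type} (R : SCSP A → Wt (SCSP A) → Prop) : Prop :=
  IsSimulation R ∧
  ∀ s Θ (X : Set A), R s Θ → SRefuses s X → ∃ Θ', TauStar Θ Θ' ∧ DRefuses Θ' X

/-- `s ⊲_S Θ`. -/
def simLE {A : Type} (s : SCSP A) (Θ : Wt (SCSP A)) : Prop :=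
  ∃ R, IsSimulation R ∧ R s Θ

/-- `s ⊲_FS Θ`. -/
def fsimLE {A : Type} (s : SCSP A) (Θ : Wt (SCSP A)) : Prop :=
  ∃ R, IsFailureSim R ∧ R s Θ

/-- The simulation preorder `P ⊑_S Q`. -/
def SimPre {A : Type} (P Q : PCSP A) : Prop :=
  ∃ Θ, TauStar Q.interp Θ ∧ Lift simLE P.interp Θ

/-- The failure simulation preorder `P ⊑_FS Q`. -/
def FSimPre {A : Type} (P Q : PCSP A) : Prop :=
  ∃ Θ, TauStar P.interp Θ ∧ Lift fsimLE Q.interp Θ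
/-! ### Syntactic operations: renaming, and ◻ / ∥ distributed over probabilistic choice -/

mutual
/-- Renaming of actions in a process term. -/
def mapP {A B : Type} (f : A → B) : PCSP A → PCSP B
  | .st s => .st (mapS f s)
  | .pch p P Q => .pch p (mapP f P) (mapP f Q)
def mapS {A B : Type} (f : A → B) : SCSP A → SCSP B
  | .nil => .nil
  | .pre a P => .pre (f a) (mapP f P)
  | .ich P Q => .ich (mapP f P) (mapP f Q)
  | .ech s t => .ech (mapS f s) (mapS f t)
  | .par X s t => .par (f '' X) (mapS f s) (mapS f t)
end

/-- `s ∥_B Q` for a state `s`, distributing over probabilistic choice. -/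
def parCS {A : Type} (B : Set A) (s : SCSP A) : PCSP A → PCSP A
  | .st t => .st (.par B s t)
  | .pch p Q₁ Q₂ => .pch p (parCS B s Q₁) (parCS B s Q₂)

/-- `P ∥_B Q` on processes, distributing over probabilistic choice. -/
def parC {A : Type} (B : Set A) : PCSP A → PCSP A → PCSP A
  | .st s, Q => parCS B s Q
  | .pch p P₁ P₂, Q => .pch p (parC B P₁ Q) (parC B P₂ Q)

/-- `s ◻ Q` for a state `s`, distributing over probabilistic choice. -/
def echCS {A : Type} (s : SCSP A) : PCSP A → PCSP A
  | .st t => .st (.ech s t)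
  | .pch p Q₁ Q₂ => .pch p (echCS s Q₁) (echCS s Q₂)

/-- `P ◻ Q` on processes, distributing over probabilistic choice. -/
def echC {A : Type} : PCSP A → PCSP A → PCSP A
  | .st s, Q => echCS s Q
  | .pch p P₁ P₂, Q => .pch p (echC P₁ Q) (echC P₂ Q)

/-- Finite (nonempty) indexed internal choice `⨅_{i} P i`. -/
def ichFin {A : Type} : (n : ℕ) → (Fin (n+1) → PCSP A) → PCSP A
  | 0, P => P 0
  | n+1, P => .st (.ich (P 0) (ichFin n (fun i => P i.succ)))

/-- Finite (nonempty) indexed probabilistic choice `⊕_{i} p i · P i`. -/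
def pchFin {A : Type} : (n : ℕ) → (Fin (n+1) → ℝ) → (Fin (n+1) → PCSP A) → PCSP A
  | 0, _, P => P 0
  | n+1, p, P => .pch (p 0) (P 0)
      (pchFin n (fun i => p i.succ / (1 - p 0)) (fun i => P i.succ))

/-- Finite (nonempty) indexed external choice of states `◻_{i} s i`. -/
def echFin {A : Type} : (n : ℕ) → (Fin (n+1) → SCSP A) → SCSP A
  | 0, s => s 0
  | n+1, s => .ech (s 0) (echFin n (fun i => s i.succ))

/-- External choice of a list of states (empty list gives `0`). -/
def echList {A : Type} : List (SCSP A) → SCSP A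
  | [] => .nil
  | s :: l => .ech s (echList l)

/-! ### State-based scalar testing -/

/-- The alphabet `Act ∪ {ω}` for ordinary (scalar) tests. -/
abbrev TAct (A : Type) := Sum A Unit

/-- The success action ω. -/
def omA {A : Type} : TAct A := Sum.inr ()

/-- Membership in the state-based results-gathering function `V` (with success action `w`). -/
inductive VMem {B : Type} (w : B) : SCSP B → ℝ → Prop where
  | succ {s : SCSP B} {Δ} : Step s (some w) Δ → VMem w s 1
  | step {s : SCSP B} {α : Option B} {Δ} (f : SCSP B → ℝ) :
      (∀ Θ, ¬ Step s (some w) Θ) → Step s α Δ →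
      (∀ t ∈ dsupp Δ, VMem w t (f t)) → VMem w s (dexp Δ f)
  | stuck {s : SCSP B} : (∀ α Δ, ¬ Step s α Δ) → VMem w s 0

/-- `V(Δ)` : the set of outcomes of a distribution, via choice functions. -/
def VD {B : Type} (w : B) (Δ : Wt (SCSP B)) : Set ℝ :=
  {r | ∃ f : SCSP B → ℝ, (∀ t ∈ dsupp Δ, VMem w t (f t)) ∧ r = dexp Δ f}

/-- The application `T ∥_Act P` of a test to a process. -/
def applyTest {A : Type} (T : PCSP (TAct A)) (P : PCSP A) : PCSP (TAct A) :=
  parC (Set.range Sum.inl) T (mapP Sum.inl P)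

/-- `A(T,P)` : state-based testing outcomes. -/
def Aset {A : Type} (T : PCSP (TAct A)) (P : PCSP A) : Set ℝ :=
  VD omA (applyTest T P).interp

/-- The Hoare preorder on sets of reals. -/
def HoareLE (X Y : Set ℝ) : Prop := ∀ x ∈ X, ∃ y ∈ Y, x ≤ y

/-- The Smyth preorder on sets of reals. -/
def SmythLE (X Y : Set ℝ) : Prop := ∀ y ∈ Y, ∃ x ∈ X, x ≤ y

/-- The may-testing preorder `⊑_pmay`. -/
def PMay {A : Type} (P Q : PCSP A) : Prop :=
  ∀ T : PCSP (TAct A), PWF T → HoareLE (Aset T P) (Aset T Q)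

/-- The must-testing preorder `⊑_pmust`. -/
def PMust {A : Type} (P Q : PCSP A) : Prop :=
  ∀ T : PCSP (TAct A), PWF T → SmythLE (Aset T P) (Aset T Q)

/-! ### Action-based scalar testing -/

/-- Membership in the action-based results-gathering function `V̄`. -/
inductive VBarMem {B : Type} (w : B) : SCSP B → ℝ → Prop where
  | succ {s : SCSP B} {Δ} : Step s (some w) Δ → VBarMem w s 1
  | step {s : SCSP B} {α : Option B} {Δ} (f : SCSP B → ℝ) :
      α ≠ some w → Step s α Δ →
      (∀ t ∈ dsupp Δ, VBarMem w t (f t)) → VBarMem w s (dexp Δ f)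
  | stuck {s : SCSP B} : (∀ α Δ, ¬ Step s α Δ) → VBarMem w s 0

/-- `V̄(Δ)`. -/
def VBarD {B : Type} (w : B) (Δ : Wt (SCSP B)) : Set ℝ :=
  {r | ∃ f : SCSP B → ℝ, (∀ t ∈ dsupp Δ, VBarMem w t (f t)) ∧ r = dexp Δ f}

/-- `Ā(T,P)` : action-based testing outcomes. -/
def AsetBar {A : Type} (T : PCSP (TAct A)) (P : PCSP A) : Set ℝ :=
  VBarD omA (applyTest T P).interp

/-- The action-based may-testing preorder `⊑̄_pmay`. -/
def PMayBar {A : Type} (P Q : PCSP A) : Prop :=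
  ∀ T : PCSP (TAct A), PWF T → HoareLE (AsetBar T P) (AsetBar T Q)

/-- The action-based must-testing preorder `⊑̄_pmust`. -/
def PMustBar {A : Type} (P Q : PCSP A) : Prop :=
  ∀ T : PCSP (TAct A), PWF T → SmythLE (AsetBar T P) (AsetBar T Q)
/-! ### ω-avoiding transitions and the relation ⊲ᵉ_FS -/

/-- `s --α-->_ω Δ` : a transition from a state not enabling the success action `w`. -/
def StepOmega {B : Type} (w : B) (s : SCSP B) (α : Option B) (Δ : Wt (SCSP B)) : Prop :=
  (∀ Θ, ¬ Step s (some w) Θ) ∧ Step s α Δ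

/-- `s --τ̂-->_ω Δ`. -/
def stepTauHatOm {B : Type} (w : B) (s : SCSP B) (Δ : Wt (SCSP B)) : Prop :=
  StepOmega w s none Δ ∨ Δ = dirac s

/-- `==τ̂==>_ω`. -/
def TauStarOm {B : Type} (w : B) : Wt (SCSP B) → Wt (SCSP B) → Prop :=
  Relation.ReflTransGen (Lift (stepTauHatOm w))

/-- `==â==>_ω` for a visible action `a`. -/
def WeakAOm {B : Type} (w : B) (a : B) (Δ Θ : Wt (SCSP B)) : Prop :=
  ∃ Δ₁ Δ₂, TauStarOm w Δ Δ₁ ∧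
    Lift (fun s Φ => StepOmega w s (some a) Φ) Δ₁ Δ₂ ∧ TauStarOm w Δ₂ Θ

/-- `==α̂==>_ω`. -/
def WeakOm {B : Type} (w : B) : Option B → Wt (SCSP B) → Wt (SCSP B) → Prop
  | none => TauStarOm w
  | some a => WeakAOm w a

/-- A postfixed point for the coinductive definition of `⊲ᵉ_FS`. -/
def IsEFailSim {B : Type} (w : B) (R : SCSP B → Wt (SCSP B) → Prop) : Prop :=
  (∀ s Θ α Δ, R s Θ → StepOmega w s α Δ → ∃ Θ', WeakOm w α Θ Θ' ∧ Lift R Δ Θ') ∧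
  (∀ s Θ (X : Set B), R s Θ → w ∈ X → SRefuses s X →
    ∃ Θ', TauStarOm w Θ Θ' ∧ DRefuses Θ' X)

/-- `s ⊲ᵉ_FS Θ` : the largest relation satisfying the transfer properties. -/
def efsimLE {B : Type} (w : B) (s : SCSP B) (Θ : Wt (SCSP B)) : Prop :=
  ∃ R, IsEFailSim w R ∧ R s Θ

/-! ### Vector-based testing with success actions from Ω -/

/-- `α!o` : update the `α`-component of the outcome tuple to 1 if `α` is a success action. -/
def bang {A Om : Type} (α : Option (Sum A Om)) (o : Om → ℝ) : Om → ℝ :=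
  fun w => if α = some (Sum.inr w) then 1 else o w

mutual
/-- Membership in the vector-based convex-closed results-gathering function `V̄↕^Ω`
for states.  -/
inductive WMem : {A Om : Type} → SCSP (Sum A Om) → (Om → ℝ) → Prop where
  | stuck {A Om : Type} {s : SCSP (Sum A Om)} :
      (∀ α Δ, ¬ Step s α Δ) → WMem s (fun _ => 0)
  | step {A Om : Type} {s : SCSP (Sum A Om)} {n : ℕ}
      (p : Fin (n+1) → ℝ) (α : Fin (n+1) → Option (Sum A Om))
      (Δ : Fin (n+1) → Wt (SCSP (Sum A Om))) (o : Fin (n+1) → Om → ℝ) :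
      (∀ i, 0 ≤ p i) → (∑ i, p i = 1) →
      (∀ i, Step s (α i) (Δ i)) →
      (∀ i, WMemD (Δ i) (o i)) →
      WMem s (fun w => ∑ i, p i * bang (α i) (o i) w)
/-- Membership in `V̄↕^Ω` for distributions. -/
inductive WMemD : {A Om : Type} → Wt (SCSP (Sum A Om)) → (Om → ℝ) → Prop where
  | mk {A Om : Type} {Δ : Wt (SCSP (Sum A Om))} (f : SCSP (Sum A Om) → Om → ℝ) :
      (∀ t ∈ dsupp Δ, WMem t (f t)) → WMemD Δ (fun w => ∑ᶠ t, Δ t * f t w)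
end

/-- `V̄↕^Ω(Δ)` as a set of outcome tuples. -/
def WsetD {A Om : Type} (Δ : Wt (SCSP (Sum A Om))) : Set (Om → ℝ) :=
  {o | WMemD Δ o}

/-- The application `T ∥_Act P` of an Ω-test to a process. -/
def applyTestO {A Om : Type} (T : PCSP (Sum A Om)) (P : PCSP A) : PCSP (Sum A Om) :=
  parC (Set.range Sum.inl) T (mapP Sum.inl P)

/-- `A↕^Ω(T,P)` : vector-based testing outcomes of a process. -/
def AO {A Om : Type} (T : PCSP (Sum A Om)) (P : PCSP A) : Set (Om → ℝ) :=
  WsetD (applyTestO T P).interp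

/-- `A↕^Ω(T,Δ)` for a distribution `Δ ∈ D(sCSP)`, via expected values. -/
def AOD {A Om : Type} (T : PCSP (Sum A Om)) (Δ : Wt (SCSP A)) : Set (Om → ℝ) :=
  {o | ∃ g : SCSP A → Om → ℝ,
    (∀ s ∈ dsupp Δ, g s ∈ AO T (.st s)) ∧ o = fun w => ∑ᶠ s, Δ s * g s w}

/-- Hoare preorder on sets of outcome tuples (componentwise order). -/
def HoareLEV {Om : Type} (X Y : Set (Om → ℝ)) : Prop := ∀ x ∈ X, ∃ y ∈ Y, x ≤ y

/-- Smyth preorder on sets of outcome tuples (componentwise order). -/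
def SmythLEV {Om : Type} (X Y : Set (Om → ℝ)) : Prop := ∀ y ∈ Y, ∃ x ∈ X, x ≤ y

/-- The vector-based may-testing preorder `⊑̄^Ω_pmay`. -/
def PMayO {A : Type} (Om : Type) (P Q : PCSP A) : Prop :=
  ∀ T : PCSP (Sum A Om), PWF T → HoareLEV (AO T P) (AO T Q)

/-- The vector-based must-testing preorder `⊑̄^Ω_pmust`. -/
def PMustO {A : Type} (Om : Type) (P Q : PCSP A) : Prop :=
  ∀ T : PCSP (Sum A Om), PWF T → SmythLEV (AO T P) (AO T Q)

/-- The unit outcome vector `ω⃗`. -/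
def unitVec {Om : Type} (w : Om) : Om → ℝ := fun w' => if w' = w then 1 else 0

/-! Occurrence of an action in a process term. -/
mutual
/-- Occurrence of an action in a process term. -/
inductive PUses : {B : Type} → B → PCSP B → Prop where
  | st {B : Type} {b : B} {s} : SUses b s → PUses b (.st s)
  | pchL {B : Type} {b : B} {p P Q} : PUses b P → PUses b (.pch p P Q)
  | pchR {B : Type} {b : B} {p P Q} : PUses b Q → PUses b (.pch p P Q)
inductive SUses : {B : Type} → B → SCSP B → Prop where
  | preAct {B : Type} {b : B} {P} : SUses b (.pre b P)
  | pre {B : Type} {b : B} {a P} : PUses b P → SUses b (.pre a P)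
  | ichL {B : Type} {b : B} {P Q} : PUses b P → SUses b (.ich P Q)
  | ichR {B : Type} {b : B} {P Q} : PUses b Q → SUses b (.ich P Q)
  | echL {B : Type} {b : B} {s t} : SUses b s → SUses b (.ech s t)
  | echR {B : Type} {b : B} {s t} : SUses b t → SUses b (.ech s t)
  | parSet {B : Type} {b : B} {X s t} : b ∈ X → SUses b (.par X s t)
  | parL {B : Type} {b : B} {X s t} : SUses b s → SUses b (.par X s t)
  | parR {B : Type} {b : B} {X s t} : SUses b t → SUses b (.par X s t)
end
/-! ### The modal logic F -/

/-- Modal formulae of the logic `F`. -/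
inductive Form (A : Type) : Type where
  | ref : Set A → Form A
  | dia : A → Form A → Form A
  | conj : (n : ℕ) → (Fin n → Form A) → Form A
  | prob : (n : ℕ) → (Fin n → ℝ) → (Fin n → Form A) → Form A

/-- Well-formed formulae: probabilistic choices carry genuine distributions. -/
inductive WFF {A : Type} : Form A → Prop where
  | ref {X} : WFF (.ref X)
  | dia {a φ} : WFF φ → WFF (.dia a φ)
  | conj {n φs} : (∀ i, WFF (φs i)) → WFF (.conj n φs)
  | prob {n p φs} : (∀ i, 0 ≤ p i) → (∑ i, p i = 1) →
      (∀ i, WFF (φs i)) → WFF (.prob n p φs)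

/-- Formulae of the sublogic `L`: no refusal construct. -/
inductive NoRef {A : Type} : Form A → Prop where
  | dia {a φ} : NoRef φ → NoRef (.dia a φ)
  | conj {n φs} : (∀ i, NoRef (φs i)) → NoRef (.conj n φs)
  | prob {n p φs} : (∀ i, NoRef (φs i)) → NoRef (.prob n p φs)

/-- The satisfaction relation `Δ ⊨ φ`. -/
inductive Sat {A : Type} : Form A → Wt (SCSP A) → Prop where
  | ref {X : Set A} {Δ Δ'} : TauStar Δ Δ' → DRefuses Δ' X → Sat (.ref X) Δ
  | dia {a φ Δ Δ'} : WeakA a Δ Δ' → Sat φ Δ' → Sat (.dia a φ) Δ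
  | conj {n φs Δ} : (∀ i, Sat (φs i) Δ) → Sat (.conj n φs) Δ
  | prob {n} {p : Fin n → ℝ} {φs Δ} (Δs : Fin n → Wt (SCSP A)) :
      (∀ i, Sat (φs i) (Δs i)) →
      TauStar Δ (fun t => ∑ i, p i * Δs i t) →
      Sat (.prob n p φs) Δ

/-- The logical preorder `⊑^L`. -/
def LPre {A : Type} (P Q : PCSP A) : Prop :=
  ∀ φ : Form A, WFF φ → NoRef φ → Sat φ P.interp → Sat φ Q.interp

/-- The logical preorder `⊑^F`. -/
def FPre {A : Type} (P Q : PCSP A) : Prop :=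
  ∀ φ : Form A, WFF φ → Sat φ Q.interp → Sat φ P.interp

mutual
/-- `CharS s φ` : `φ` is an F-characteristic formula `φ_s` of the state `s`. -/
inductive CharS : {A : Type} → SCSP A → Form A → Prop where
  | noTau {A : Type} {s : SCSP A} (n : ℕ) (a : Fin n → A)
      (Δ : Fin n → Wt (SCSP A)) (φ : Fin n → Form A) :
      (∀ Θ, ¬ Step s none Θ) →
      (∀ i, Step s (some (a i)) (Δ i)) →
      (∀ b Θ, Step s (some b) Θ → ∃ i, a i = b ∧ Δ i = Θ) →
      (∀ i, CharD (Δ i) (φ i)) →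
      CharS s (.conj (n+1) (Fin.snoc (fun i => .dia (a i) (φ i))
        (.ref {b : A | ∀ Θ, ¬ Step s (some b) Θ})))
  | tau {A : Type} {s : SCSP A} (n m : ℕ) (a : Fin n → A)
      (Δ : Fin n → Wt (SCSP A)) (φ : Fin n → Form A)
      (Θs : Fin m → Wt (SCSP A)) (ψ : Fin m → Form A) :
      (∃ Θ, Step s none Θ) →
      (∀ i, Step s (some (a i)) (Δ i)) →
      (∀ b Θ, Step s (some b) Θ → ∃ i, a i = b ∧ Δ i = Θ) →
      (∀ j, Step s none (Θs j)) →
      (∀ Θ, Step s none Θ → ∃ j, Θs j = Θ) →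
      (∀ i, CharD (Δ i) (φ i)) →
      (∀ j, CharD (Θs j) (ψ j)) →
      CharS s (.conj (n+m) (Fin.append (fun i => .dia (a i) (φ i)) ψ))
/-- `CharD Δ φ` : `φ` is an F-characteristic formula `φ_Δ` of the distribution `Δ`. -/
inductive CharD : {A : Type} → Wt (SCSP A) → Form A → Prop where
  | mk {A : Type} {Δ : Wt (SCSP A)} (n : ℕ) (s : Fin n → SCSP A) (φ : Fin n → Form A) :
      Function.Injective s →
      (∀ i, s i ∈ dsupp Δ) →
      (∀ t ∈ dsupp Δ, ∃ i, s i = t) →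
      (∀ i, CharS (s i) (φ i)) →
      CharD Δ (.prob n (fun i => Δ (s i)) φ)
end

mutual
/-- `CharSL s ψ` : `ψ` is an L-characteristic formula `ψ_s` of the state `s`. -/
inductive CharSL : {A : Type} → SCSP A → Form A → Prop where
  | noTau {A : Type} {s : SCSP A} (n : ℕ) (a : Fin n → A)
      (Δ : Fin n → Wt (SCSP A)) (φ : Fin n → Form A) :
      (∀ Θ, ¬ Step s none Θ) →
      (∀ i, Step s (some (a i)) (Δ i)) →
      (∀ b Θ, Step s (some b) Θ → ∃ i, a i = b ∧ Δ i = Θ) →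
      (∀ i, CharDL (Δ i) (φ i)) →
      CharSL s (.conj n (fun i => .dia (a i) (φ i)))
  | tau {A : Type} {s : SCSP A} (n m : ℕ) (a : Fin n → A)
      (Δ : Fin n → Wt (SCSP A)) (φ : Fin n → Form A)
      (Θs : Fin m → Wt (SCSP A)) (ψ : Fin m → Form A) :
      (∃ Θ, Step s none Θ) →
      (∀ i, Step s (some (a i)) (Δ i)) →
      (∀ b Θ, Step s (some b) Θ → ∃ i, a i = b ∧ Δ i = Θ) →
      (∀ j, Step s none (Θs j)) →
      (∀ Θ, Step s none Θ → ∃ j, Θs j = Θ) →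
      (∀ i, CharDL (Δ i) (φ i)) →
      (∀ j, CharDL (Θs j) (ψ j)) →
      CharSL s (.conj (n+m) (Fin.append (fun i => .dia (a i) (φ i)) ψ))
/-- `CharDL Δ ψ` : `ψ` is an L-characteristic formula `ψ_Δ` of the distribution `Δ`. -/
inductive CharDL : {A : Type} → Wt (SCSP A) → Form A → Prop where
  | mk {A : Type} {Δ : Wt (SCSP A)} (n : ℕ) (s : Fin n → SCSP A) (φ : Fin n → Form A) :
      Function.Injective s →
      (∀ i, s i ∈ dsupp Δ) →
      (∀ t ∈ dsupp Δ, ∃ i, s i = t) →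
      (∀ i, CharSL (s i) (φ i)) →
      CharDL Δ (.prob n (fun i => Δ (s i)) φ)
end
/-! ### The sub-language nCSP and (in)equational theories -/

mutual
/-- Membership in `nCSP`: no parallel composition. -/
inductive PNoPar : {A : Type} → PCSP A → Prop where
  | st {A : Type} {s : SCSP A} : SNoPar s → PNoPar (.st s)
  | pch {A : Type} {p : ℝ} {P Q : PCSP A} : PNoPar P → PNoPar Q → PNoPar (.pch p P Q)
inductive SNoPar : {A : Type} → SCSP A → Prop where
  | nil {A : Type} : SNoPar (SCSP.nil (A := A))
  | pre {A : Type} {a : A} {P} : PNoPar P → SNoPar (.pre a P)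
  | ich {A : Type} {P Q : PCSP A} : PNoPar P → PNoPar Q → SNoPar (.ich P Q)
  | ech {A : Type} {s t : SCSP A} : SNoPar s → SNoPar t → SNoPar (.ech s t)
end

/-- Initial actions of a state-based term (`none` denotes τ). -/
def initsS {A : Type} : SCSP A → Set (Option A)
  | .nil => ∅
  | .pre a _ => {some a}
  | .ich _ _ => {none}
  | .ech s t => initsS s ∪ initsS t
  | .par _ s t => initsS s ∪ initsS t

/-- Initial actions of a process term. -/
def initsP {A : Type} : PCSP A → Set (Option A)
  | .st s => initsS s
  | .pch _ P Q => initsP P ∪ initsP Q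

/-- Derivability in the equational theory `=_E` of Figure 3. -/
inductive EqE {A : Type} : PCSP A → PCSP A → Prop where
  | refl (P) : EqE P P
  | symm {P Q} : EqE P Q → EqE Q P
  | trans {P Q R} : EqE P Q → EqE Q R → EqE P R
  | congPre (a : A) {P Q} : EqE P Q → EqE (.st (.pre a P)) (.st (.pre a Q))
  | congIch {P₁ P₂ Q₁ Q₂} : EqE P₁ Q₁ → EqE P₂ Q₂ →
      EqE (.st (.ich P₁ P₂)) (.st (.ich Q₁ Q₂))
  | congEch {P₁ P₂ Q₁ Q₂} : EqE P₁ Q₁ → EqE P₂ Q₂ →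
      EqE (echC P₁ P₂) (echC Q₁ Q₂)
  | congPch (p : ℝ) {P₁ P₂ Q₁ Q₂} : EqE P₁ Q₁ → EqE P₂ Q₂ →
      EqE (.pch p P₁ P₂) (.pch p Q₁ Q₂)
  | P1 (p : ℝ) (h₀ : 0 < p) (h₁ : p < 1) (P) : EqE (.pch p P P) P
  | P2 (p : ℝ) (h₀ : 0 < p) (h₁ : p < 1) (P Q) :
      EqE (.pch p P Q) (.pch (1-p) Q P)
  | P3 (p q : ℝ) (hp₀ : 0 < p) (hp₁ : p < 1) (hq₀ : 0 < q) (hq₁ : q < 1) (P Q R) :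
      EqE (.pch q (.pch p P Q) R)
          (.pch (p*q) P (.pch ((1-p)*q/(1-p*q)) Q R))
  | I1 (P) : EqE (.st (.ich P P)) P
  | I2 (P Q) : EqE (.st (.ich P Q)) (.st (.ich Q P))
  | I3 (P Q R) : EqE (.st (.ich (.st (.ich P Q)) R)) (.st (.ich P (.st (.ich Q R))))
  | E1 (P) : EqE (echC P (.st .nil)) P
  | E2 (P Q) : EqE (echC P Q) (echC Q P)
  | E3 (P Q R) : EqE (echC (echC P Q) R) (echC P (echC Q R))
  | EI (a : A) (P Q) :
      EqE (echC (.st (.pre a P)) (.st (.pre a Q)))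
          (.st (.ich (.st (.pre a P)) (.st (.pre a Q))))
  | D1 (p : ℝ) (h₀ : 0 < p) (h₁ : p < 1) (P Q R) :
      EqE (echC P (.pch p Q R)) (.pch p (echC P Q) (echC P R))
  | D2 (a : A) (P Q R) :
      EqE (echC (.st (.pre a P)) (.st (.ich Q R)))
          (.st (.ich (echC (.st (.pre a P)) Q) (echC (.st (.pre a P)) R)))
  | D3 (P₁ P₂ Q₁ Q₂) :
      EqE (echC (.st (.ich P₁ P₂)) (.st (.ich Q₁ Q₂)))
          (.st (.ich
            (.st (.ich (echC P₁ (.st (.ich Q₁ Q₂))) (echC P₂ (.st (.ich Q₁ Q₂)))))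
            (.st (.ich (echC (.st (.ich P₁ P₂)) Q₁) (echC (.st (.ich P₁ P₂)) Q₂)))))

/-- Derivability from the probabilistic axioms P1–P3 and D1 only (`=_prob`). -/
inductive EqProb {A : Type} : PCSP A → PCSP A → Prop where
  | refl (P) : EqProb P P
  | symm {P Q} : EqProb P Q → EqProb Q P
  | trans {P Q R} : EqProb P Q → EqProb Q R → EqProb P R
  | congPre (a : A) {P Q} : EqProb P Q → EqProb (.st (.pre a P)) (.st (.pre a Q))
  | congIch {P₁ P₂ Q₁ Q₂} : EqProb P₁ Q₁ → EqProb P₂ Q₂ →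
      EqProb (.st (.ich P₁ P₂)) (.st (.ich Q₁ Q₂))
  | congEch {P₁ P₂ Q₁ Q₂} : EqProb P₁ Q₁ → EqProb P₂ Q₂ →
      EqProb (echC P₁ P₂) (echC Q₁ Q₂)
  | congPch (p : ℝ) {P₁ P₂ Q₁ Q₂} : EqProb P₁ Q₁ → EqProb P₂ Q₂ →
      EqProb (.pch p P₁ P₂) (.pch p Q₁ Q₂)
  | P1 (p : ℝ) (h₀ : 0 < p) (h₁ : p < 1) (P) : EqProb (.pch p P P) P
  | P2 (p : ℝ) (h₀ : 0 < p) (h₁ : p < 1) (P Q) :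
      EqProb (.pch p P Q) (.pch (1-p) Q P)
  | P3 (p q : ℝ) (hp₀ : 0 < p) (hp₁ : p < 1) (hq₀ : 0 < q) (hq₁ : q < 1) (P Q R) :
      EqProb (.pch q (.pch p P Q) R)
          (.pch (p*q) P (.pch ((1-p)*q/(1-p*q)) Q R))
  | D1 (p : ℝ) (h₀ : 0 < p) (h₁ : p < 1) (P Q R) :
      EqProb (echC P (.pch p Q R)) (.pch p (echC P Q) (echC P R))

mutual
/-- Normal forms. -/
inductive IsNF : {A : Type} → PCSP A → Prop where
  | pch {A : Type} {p : ℝ} {N₁ N₂ : PCSP A} : 0 < p → p < 1 →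
      IsNF N₁ → IsNF N₂ → IsNF (.pch p N₁ N₂)
  | ich {A : Type} {N₁ N₂ : PCSP A} : IsNF N₁ → IsNF N₂ → IsNF (.st (.ich N₁ N₂))
  | ext {A : Type} {s : SCSP A} : IsExtNF s → IsNF (.st s)
/-- External-choice normal forms `◻_{i∈I} a_i.N_i`. -/
inductive IsExtNF : {A : Type} → SCSP A → Prop where
  | nil {A : Type} : IsExtNF (SCSP.nil (A := A))
  | pre {A : Type} {a : A} {N} : IsNF N → IsExtNF (.pre a N)
  | ech {A : Type} {s t : SCSP A} : IsExtNF s → IsExtNF t → IsExtNF (.ech s t)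
end

/-- Derivability in the inequational theory for may testing (`⊑_Emay`). -/
inductive LeMay {A : Type} : PCSP A → PCSP A → Prop where
  | ofEq {P Q} : EqE P Q → LeMay P Q
  | trans {P Q R} : LeMay P Q → LeMay Q R → LeMay P R
  | congPre (a : A) {P Q} : LeMay P Q → LeMay (.st (.pre a P)) (.st (.pre a Q))
  | congIch {P₁ P₂ Q₁ Q₂} : LeMay P₁ Q₁ → LeMay P₂ Q₂ →
      LeMay (.st (.ich P₁ P₂)) (.st (.ich Q₁ Q₂))
  | congEch {P₁ P₂ Q₁ Q₂} : LeMay P₁ Q₁ → LeMay P₂ Q₂ →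
      LeMay (echC P₁ P₂) (echC Q₁ Q₂)
  | congPch (p : ℝ) {P₁ P₂ Q₁ Q₂} : LeMay P₁ Q₁ → LeMay P₂ Q₂ →
      LeMay (.pch p P₁ P₂) (.pch p Q₁ Q₂)
  | may0 (a b : A) (P Q) :
      LeMay (echC (.st (.pre a P)) (.st (.pre b Q)))
            (.st (.ich (.st (.pre a P)) (.st (.pre b Q))))
  | may0' (a b : A) (P Q) :
      LeMay (.st (.ich (.st (.pre a P)) (.st (.pre b Q))))
            (echC (.st (.pre a P)) (.st (.pre b Q)))
  | may1 (P Q) : LeMay P (.st (.ich P Q))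
  | may2 (P) : LeMay (.st .nil) P
  | may3 (a : A) (p : ℝ) (h₀ : 0 < p) (h₁ : p < 1) (P Q) :
      LeMay (.st (.pre a (.pch p P Q))) (.pch p (.st (.pre a P)) (.st (.pre a Q)))

/-- Derivability in the inequational theory for must testing (`⊑_Emust`). -/
inductive LeMust {A : Type} : PCSP A → PCSP A → Prop where
  | ofEq {P Q} : EqE P Q → LeMust P Q
  | trans {P Q R} : LeMust P Q → LeMust Q R → LeMust P R
  | congPre (a : A) {P Q} : LeMust P Q → LeMust (.st (.pre a P)) (.st (.pre a Q))
  | congIch {P₁ P₂ Q₁ Q₂} : LeMust P₁ Q₁ → LeMust P₂ Q₂ →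
      LeMust (.st (.ich P₁ P₂)) (.st (.ich Q₁ Q₂))
  | congEch {P₁ P₂ Q₁ Q₂} : LeMust P₁ Q₁ → LeMust P₂ Q₂ →
      LeMust (echC P₁ P₂) (echC Q₁ Q₂)
  | congPch (p : ℝ) {P₁ P₂ Q₁ Q₂} : LeMust P₁ Q₁ → LeMust P₂ Q₂ →
      LeMust (.pch p P₁ P₂) (.pch p Q₁ Q₂)
  | must1 (P Q) : LeMust (.st (.ich P Q)) Q
  | must2 (n : ℕ) (a : Fin (n+1) → A) (m : Fin (n+1) → ℕ)
      (p : (i : Fin (n+1)) → Fin (m i + 1) → ℝ)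
      (Q : (i : Fin (n+1)) → Fin (m i + 1) → PCSP A)
      (P : (i : Fin (n+1)) → Fin (m i + 1) → PCSP A)
      (R : PCSP A) :
      (∀ i j, 0 ≤ p i j) → (∀ i, ∑ j, p i j = 1) →
      initsP R ⊆ {α | ∃ i, α = some (a i)} →
      LeMust
        (.st (.ich R (ichFin n (fun i =>
          pchFin (m i) (p i) (fun j => echC (.st (.pre (a i) (Q i j))) (P i j))))))
        (.st (echFin n (fun i => .pre (a i) (pchFin (m i) (p i) (Q i)))))

/-! ### Auxiliary lemmas for Lemma 8.5 -/

section Aux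

variable {A : Type}

lemma dirac_self (s : SCSP A) : dirac s s = 1 := by simp [dirac]

lemma dirac_ne {s t : SCSP A} (h : t ≠ s) : dirac s t = 0 := by simp [dirac, h]

theorem interp_supp_finite : ∀ P : PCSP A, (Function.support P.interp).Finite
  | .st s => by
      apply Set.Finite.subset (Set.finite_singleton s)
      intro t ht
      simp only [Function.mem_support, PCSP.interp, dirac] at ht
      by_contra hne
      rw [if_neg (fun h => hne (by simp [h]))] at ht
      exact ht rfl
  | .pch p P Q => by
      apply Set.Finite.subset ((interp_supp_finite P).union (interp_supp_finite Q))
      intro t ht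
      simp only [Function.mem_support, PCSP.interp] at ht
      by_contra hne
      simp only [Set.mem_union, Function.mem_support, not_or, not_not] at hne
      simp [hne.1, hne.2] at ht

theorem interp_nonneg : ∀ {P : PCSP A}, PWF P → ∀ t, 0 ≤ P.interp t
  | .st s, _, t => by unfold PCSP.interp dirac; positivity
  | .pch p P Q, h, t => by
      rcases h with ⟨⟩ | ⟨h0, h1, hP, hQ⟩
      have := interp_nonneg hP t
      have := interp_nonneg hQ t
      unfold PCSP.interp
      nlinarith

theorem interp_mass : ∀ {P : PCSP A}, PWF P → ∑ᶠ t, P.interp t = 1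
  | .st s, _ => by
      unfold PCSP.interp
      rw [finsum_eq_single _ s (fun x hx => dirac_ne hx), dirac_self]
  | .pch p P Q, h => by
      rcases h with ⟨⟩ | ⟨h0, h1, hP, hQ⟩
      unfold PCSP.interp
      have hfP := interp_supp_finite P
      have hfQ := interp_supp_finite Q
      have hfP' : (Function.support fun t => p * P.interp t).Finite := by
        apply hfP.subset; intro t ht; simp only [Function.mem_support] at *
        intro h; simp [h] at ht
      have hfQ' : (Function.support fun t => (1-p) * Q.interp t).Finite := by
        apply hfQ.subset; intro t ht; simp only [Function.mem_support] at *
        intro h; simp [h] at ht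
      rw [finsum_add_distrib hfP' hfQ', ← mul_finsum _ _, ← mul_finsum _ _,
        interp_mass hP, interp_mass hQ]
      ring

theorem interp_le_one {P : PCSP A} (h : PWF P) (t : SCSP A) : P.interp t ≤ 1 := by
  rw [← interp_mass h]
  exact single_le_finsum t (interp_supp_finite P) (interp_nonneg h)

end Aux

section Aux2

variable {A : Type}

lemma eq_dirac_of_apply_one {P : PCSP A} (h : PWF P) {s : SCSP A}
    (h1 : P.interp s = 1) : P.interp = dirac s := by
  funext t
  by_cases hts : t = s
  · subst hts; rw [h1, dirac_self]
  · rw [dirac_ne hts]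
    set T := (interp_supp_finite P).toFinset with hT
    have hmass : ∑ x ∈ T, P.interp x = 1 := by
      rw [← finsum_eq_sum _ (interp_supp_finite P), interp_mass h]
    by_contra hne
    have hs : s ∈ T := by
      simp [hT, Set.Finite.mem_toFinset, Function.mem_support, h1]
    have ht : t ∈ T := by
      simp [hT, Set.Finite.mem_toFinset, Function.mem_support, hne]
    have hpair : P.interp t + P.interp s = ∑ x ∈ ({t, s} : Finset (SCSP A)), P.interp x :=
      (Finset.sum_pair hts).symm
    have hsub : ({t, s} : Finset (SCSP A)) ⊆ T := by
      intro x hx; rcases Finset.mem_insert.mp hx with rfl | hx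
      · exact ht
      · rwa [Finset.mem_singleton.mp hx]
    have hle : ∑ x ∈ ({t, s} : Finset (SCSP A)), P.interp x ≤ ∑ x ∈ T, P.interp x :=
      Finset.sum_le_sum_of_subset_of_nonneg hsub (fun x _ _ => interp_nonneg h x)
    have hle2 : P.interp t + P.interp s ≤ 1 := by rw [hpair, hmass] at *; exact hle
    have := interp_nonneg h t
    exact hne (by linarith)

/-- Number of probabilistic-choice nodes. -/
def psize : PCSP A → ℕ
  | .st _ => 0
  | .pch _ P Q => psize P + psize Q + 1

/-- Lemma D: a process whose interpretation is a point distribution is provably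
equal to that state. -/
lemma eqProb_of_interp_dirac : ∀ (n : ℕ) (P : PCSP A), psize P ≤ n → PWF P →
    ∀ s : SCSP A, P.interp = dirac s → EqProb P (.st s)
  | n, .st t, _, _, s, hd => by
      have h1 : dirac t s = dirac s s := by rw [← hd]; rfl
      rw [dirac_self] at h1
      have hts : t = s := by
        by_contra hne
        rw [dirac_ne (show s ≠ t from fun h => hne h.symm)] at h1
        norm_num at h1
      subst hts; exact EqProb.refl _
  | 0, .pch p P Q, hsz, _, s, hd => by simp [psize] at hsz
  | Nat.succ n, .pch p P Q, hsz, hw, s, hd => by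
      rcases hw with ⟨⟩ | ⟨h0, h1, hP, hQ⟩
      have hsz' : psize P + psize Q + 1 ≤ n + 1 := by simpa [psize] using hsz
      have hszP : psize P ≤ n := by omega
      have hszQ : psize Q ≤ n := by omega
      -- both components are dirac s
      have hnnP := interp_nonneg hP
      have hnnQ := interp_nonneg hQ
      have hzero : ∀ t, t ≠ s → P.interp t = 0 ∧ Q.interp t = 0 := by
        intro t hts
        have := congrFun hd t
        simp only [PCSP.interp] at this
        rw [dirac_ne hts] at this
        constructor <;> nlinarith [hnnP t, hnnQ t]
      have hPd : P.interp = dirac s := by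
        apply eq_dirac_of_apply_one hP
        have := interp_mass hP
        rwa [finsum_eq_single _ s (fun x hx => (hzero x hx).1)] at this
      have hQd : Q.interp = dirac s := by
        apply eq_dirac_of_apply_one hQ
        have := interp_mass hQ
        rwa [finsum_eq_single _ s (fun x hx => (hzero x hx).2)] at this
      have e1 := eqProb_of_interp_dirac n P hszP hP s hPd
      have e2 := eqProb_of_interp_dirac n Q hszQ hQ s hQd
      exact EqProb.trans (EqProb.congPch p e1 e2) (EqProb.P1 p h0 h1 _)

end Aux2

section Aux3

variable {A : Type}

/-- Lemma F: merging two probabilistic choices with the same left argument. -/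
lemma combine_pch (p q : ℝ) (hp0 : 0 < p) (hp1 : p < 1) (hq0 : 0 < q) (hq1 : q < 1)
    (X Y : PCSP A) :
    EqProb (.pch (p + (1-p)*q) X Y) (.pch p X (.pch q X Y)) := by
  set q' := p + (1-p)*q with hq'
  have hq'0 : 0 < q' := by nlinarith
  have hq'1 : q' < 1 := by nlinarith
  set p' := p / q' with hp'
  have hp'0 : 0 < p' := div_pos hp0 hq'0
  have hpq' : p < q' := by nlinarith
  have hp'1 : p' < 1 := (div_lt_one hq'0).mpr hpq'
  have e1 : EqProb (.pch q' X Y) (.pch q' (.pch p' X X) Y) :=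
    EqProb.congPch q' (EqProb.symm (EqProb.P1 p' hp'0 hp'1 X)) (EqProb.refl Y)
  have e2 := EqProb.P3 p' q' hp'0 hp'1 hq'0 hq'1 X X Y
  have c1 : p' * q' = p := by
    rw [hp', div_mul_cancel₀ _ (ne_of_gt hq'0)]
  have c3 : (1 - p') * q' = (1-p)*q := by
    rw [sub_mul, one_mul, hp', div_mul_cancel₀ _ (ne_of_gt hq'0), hq']; ring
  have c2 : (1 - p') * q' / (1 - p' * q') = q := by
    rw [c1, c3, mul_comm, mul_div_assoc, div_self (by linarith : (1:ℝ)-p ≠ 0), mul_one]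
  rw [c2, c1] at e2
  exact EqProb.trans e1 e2

/-- `P'` witnesses the extraction of the point `s` with weight `r` from `P`. -/
def Extr (s : SCSP A) (r : ℝ) (P P' : PCSP A) : Prop :=
  PWF P' ∧ (P.interp = fun t => r * dirac s t + (1-r) * P'.interp t) ∧
    EqProb P (.pch r (.st s) P')

lemma extract_core (s : SCSP A) (p : ℝ) (hp0 : 0 < p) (hp1 : p < 1)
    (P1 P2 : PCSP A) (w1 : PWF P1) (w2 : PWF P2)
    (hle : P2.interp s ≤ P1.interp s)
    (h1 : 0 < P1.interp s → P1.interp s < 1 → ∃ P', Extr s (P1.interp s) P1 P')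
    (h2 : 0 < P2.interp s → P2.interp s < 1 → ∃ P', Extr s (P2.interp s) P2 P')
    (r : ℝ) (hr : r = p * P1.interp s + (1-p) * P2.interp s)
    (hr0 : 0 < r) (hr1 : r < 1) :
    ∃ P', Extr s r (.pch p P1 P2) P' := by
  have hnn1 := interp_nonneg w1
  have hnn2 := interp_nonneg w2
  have hle1 := interp_le_one w1 s
  by_cases hr1eq : P1.interp s = 1
  -- Case I : r1 = 1
  · have hfd : P1.interp = dirac s := eq_dirac_of_apply_one w1 hr1eq
    have e1 : EqProb P1 (.st s) := eqProb_of_interp_dirac (psize P1) P1 le_rfl w1 s hfd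
    have hr2lt : P2.interp s < 1 := by nlinarith
    by_cases hr2z : P2.interp s ≤ 0
    -- Case I.a : r2 = 0
    · have hr2 : P2.interp s = 0 := le_antisymm hr2z (hnn2 s)
      have hrp : r = p := by rw [hr, hr1eq, hr2]; ring
      refine ⟨P2, w2, ?_, ?_⟩
      · funext t
        simp only [PCSP.interp]
        rw [congrFun hfd t, hrp]
      · rw [hrp]
        exact EqProb.congPch p e1 (EqProb.refl P2)
    -- Case I.b : 0 < r2 < 1
    · have hr2pos : 0 < P2.interp s := lt_of_not_ge hr2z
      obtain ⟨P2', w2', hi2, he2⟩ := h2 hr2pos hr2lt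
      have hre : r = p + (1-p) * P2.interp s := by rw [hr, hr1eq]; ring
      have ec := combine_pch p (P2.interp s) hp0 hp1 hr2pos hr2lt (.st s) P2'
      rw [← hre] at ec
      refine ⟨P2', w2', ?_, ?_⟩
      · funext t
        simp only [PCSP.interp]
        rw [congrFun hfd t, congrFun hi2 t]
        linear_combination (P2'.interp t - dirac s t) * hre
      · exact EqProb.trans (EqProb.congPch p e1 he2) (EqProb.symm ec)
  -- Case II : r1 < 1
  · have hr1lt : P1.interp s < 1 := lt_of_le_of_ne hle1 hr1eq
    have hr1pos : 0 < P1.interp s := by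
      rcases lt_or_ge 0 (P1.interp s) with h | h
      · exact h
      · exfalso; nlinarith [hnn1 s, hnn2 s]
    obtain ⟨P1', w1', hi1, he1⟩ := h1 hr1pos hr1lt
    have h1r1 : (0:ℝ) < 1 - P1.interp s := by linarith
    have hr1p1 : P1.interp s * p < 1 := by nlinarith
    have hr1p0 : 0 < P1.interp s * p := by positivity
    have hden : (0:ℝ) < 1 - P1.interp s * p := by linarith
    have hden' : (1:ℝ) - P1.interp s * p ≠ 0 := ne_of_gt hden
    set c := (1 - P1.interp s) * p / (1 - P1.interp s * p) with hc
    have hc0 : 0 < c := by positivity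
    have hc1 : c < 1 := by
      rw [hc, div_lt_one hden]; nlinarith
    have key1 : (1 - P1.interp s * p) * c = (1 - P1.interp s) * p := by
      rw [hc]; field_simp
    have key2 : (1 - P1.interp s * p) * (1 - c) = 1 - p := by
      linear_combination -key1
    by_cases hr2z : P2.interp s ≤ 0
    -- Case II.a : r2 = 0
    · have hr2 : P2.interp s = 0 := le_antisymm hr2z (hnn2 s)
      have hrp : P1.interp s * p = r := by rw [hr, hr2]; ring
      have step2 := EqProb.P3 (P1.interp s) p hr1pos hr1lt hp0 hp1 (.st s) P1' P2
      rw [← hc, hrp] at step2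
      have J1 : (1-r) * c = (1 - P1.interp s) * p := by rw [← hrp]; exact key1
      have J2 : (1-r) * (1-c) = 1 - p := by rw [← hrp]; exact key2
      refine ⟨.pch c P1' P2, PWF.pch hc0 hc1 w1' w2, ?_, ?_⟩
      · funext t
        simp only [PCSP.interp]
        rw [congrFun hi1 t]
        linear_combination (dirac s t) * hrp - (P1'.interp t) * J1 - (P2.interp t) * J2
      · exact EqProb.trans (EqProb.congPch p he1 (EqProb.refl P2)) step2
    -- Case II.b : 0 < r2
    · have hr2pos : 0 < P2.interp s := lt_of_not_ge hr2z
      have hr2lt : P2.interp s < 1 := lt_of_le_of_lt hle hr1lt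
      obtain ⟨P2', w2', hi2, he2⟩ := h2 hr2pos hr2lt
      have h1c0 : 0 < 1 - c := by linarith
      have h1c1 : 1 - c < 1 := by linarith
      have hq0 : 0 < P2.interp s * (1 - c) := by positivity
      have hq1 : P2.interp s * (1 - c) < 1 := by nlinarith
      have hdden : (0:ℝ) < 1 - P2.interp s * (1 - c) := by linarith
      have hdden' : (1:ℝ) - P2.interp s * (1 - c) ≠ 0 := ne_of_gt hdden
      set d := (1 - P2.interp s) * (1 - c) / (1 - P2.interp s * (1 - c)) with hd
      have hd0 : 0 < d := by
        rw [hd]; exact div_pos (mul_pos (by linarith) h1c0) hdden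
      have hd1 : d < 1 := by
        rw [hd, div_lt_one hdden]; nlinarith
      have dkey1 : (1 - P2.interp s * (1 - c)) * d = (1 - P2.interp s) * (1 - c) := by
        rw [hd]; field_simp
      have key3 : (1 - P1.interp s * p) * (1 - P2.interp s * (1 - c)) = 1 - r := by
        rw [hr]; linear_combination (-(P2.interp s)) * key2
      have hsum : P1.interp s * p + (1 - P1.interp s * p) * (P2.interp s * (1 - c)) = r := by
        linear_combination -key3
      have I1 : (1-r) * d = (1-p) * (1 - P2.interp s) := by
        rw [← key3, mul_assoc, dkey1]
        linear_combination (1 - P2.interp s) * key2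
      have I2 : (1-r) * (1-d) = p * (1 - P1.interp s) := by
        linear_combination -I1 - hr
      -- the chain
      have step1 : EqProb (.pch p P1 P2)
          (.pch p (.pch (P1.interp s) (.st s) P1') (.pch (P2.interp s) (.st s) P2')) :=
        EqProb.congPch p he1 he2
      have step2 := EqProb.P3 (P1.interp s) p hr1pos hr1lt hp0 hp1
        (.st s) P1' (.pch (P2.interp s) (.st s) P2')
      rw [← hc] at step2
      have i1 := EqProb.P2 c hc0 hc1 P1' (.pch (P2.interp s) (.st s) P2')
      have i2 := EqProb.P3 (P2.interp s) (1-c) hr2pos hr2lt h1c0 h1c1 (.st s) P2' P1'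
      rw [← hd] at i2
      have step3 : EqProb
          (.pch (P1.interp s * p) (.st s)
            (.pch c P1' (.pch (P2.interp s) (.st s) P2')))
          (.pch (P1.interp s * p) (.st s)
            (.pch (P2.interp s * (1-c)) (.st s) (.pch d P2' P1'))) :=
        EqProb.congPch _ (EqProb.refl _) (EqProb.trans i1 i2)
      have step4 := combine_pch (P1.interp s * p) (P2.interp s * (1-c))
        hr1p0 hr1p1 hq0 hq1 (.st s) (.pch d P2' P1')
      rw [hsum] at step4
      refine ⟨.pch d P2' P1', PWF.pch hd0 hd1 w2' w1', ?_, ?_⟩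
      · funext t
        simp only [PCSP.interp]
        rw [congrFun hi1 t, congrFun hi2 t]
        linear_combination (-(dirac s t)) * hr - (P1'.interp t) * I2 - (P2'.interp t) * I1
      · exact EqProb.trans step1 (EqProb.trans step2
          (EqProb.trans step3 (EqProb.symm step4)))

end Aux3

section Aux4

variable {A : Type}

lemma extract : ∀ (n : ℕ) (P : PCSP A), psize P ≤ n → PWF P → ∀ s : SCSP A,
    0 < P.interp s → P.interp s < 1 → ∃ P', Extr s (P.interp s) P P'
  | n, .st t, _, _, s, h0, h1 => by
      exfalso
      simp only [PCSP.interp, dirac] at h0 h1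
      split_ifs at h0 h1 <;> linarith
  | 0, .pch p P1 P2, hsz, _, s, h0, h1 => by simp [psize] at hsz
  | Nat.succ n, .pch p P1 P2, hsz, hw, s, h0, h1 => by
      rcases hw with ⟨⟩ | ⟨hp0, hp1, w1, w2⟩
      have hsz' : psize P1 + psize P2 + 1 ≤ n + 1 := by simpa [psize] using hsz
      have hszP : psize P1 ≤ n := by omega
      have hszQ : psize P2 ≤ n := by omega
      have hyp1 : 0 < P1.interp s → P1.interp s < 1 →
          ∃ P', Extr s (P1.interp s) P1 P' := fun a b => extract n P1 hszP w1 s a b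
      have hyp2 : 0 < P2.interp s → P2.interp s < 1 →
          ∃ P', Extr s (P2.interp s) P2 P' := fun a b => extract n P2 hszQ w2 s a b
      have hiv : (PCSP.pch p P1 P2).interp s
          = p * P1.interp s + (1-p) * P2.interp s := rfl
      rcases le_total (P2.interp s) (P1.interp s) with hle | hle
      · exact extract_core s p hp0 hp1 P1 P2 w1 w2 hle hyp1 hyp2 _ hiv h0 h1
      · have hc := extract_core s (1-p) (by linarith) (by linarith) P2 P1 w2 w1 hle
          hyp2 hyp1 ((PCSP.pch p P1 P2).interp s) (by rw [hiv]; ring) h0 h1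
        obtain ⟨P', w', hi, he⟩ := hc
        refine ⟨P', w', ?_, ?_⟩
        · funext t
          have := congrFun hi t
          simp only [PCSP.interp] at this ⊢
          linarith
        · exact EqProb.trans (EqProb.P2 p hp0 hp1 P1 P2) he

lemma main_aux [Fintype A] : ∀ (n : ℕ) (P Q : PCSP A), PWF P → PWF Q →
    P.interp = Q.interp → ((interp_supp_finite P).toFinset.card ≤ n) → EqProb P Q := by
  intro n
  induction n with
  | zero =>
      intro P Q hPw hQw h hcard
      exfalso
      have hmass := interp_mass hPw
      have : (interp_supp_finite P).toFinset = ∅ := Finset.card_eq_zero.mp (by omega)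
      have hz : ∀ t, P.interp t = 0 := by
        intro t
        by_contra ht
        have : t ∈ (interp_supp_finite P).toFinset := by
          simp [Set.Finite.mem_toFinset, Function.mem_support, ht]
        simp [this] at *
        simp_all
      rw [finsum_eq_zero_of_forall_eq_zero hz] at hmass
      norm_num at hmass
  | succ n ih =>
      intro P Q hPw hQw h hcard
      -- the support is nonempty
      have hmass := interp_mass hPw
      have hne : ∃ s, P.interp s ≠ 0 := by
        by_contra hz
        push_neg at hz
        rw [finsum_eq_zero_of_forall_eq_zero hz] at hmass
        norm_num at hmass
      obtain ⟨s, hs⟩ := hne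
      have hspos : 0 < P.interp s := lt_of_le_of_ne (interp_nonneg hPw s) (Ne.symm hs)
      by_cases hone : P.interp s = 1
      · -- both are the point distribution at s
        have hPd : P.interp = dirac s := eq_dirac_of_apply_one hPw hone
        have hQd : Q.interp = dirac s := by rw [← h]; exact hPd
        exact EqProb.trans (eqProb_of_interp_dirac (psize P) P le_rfl hPw s hPd)
          (EqProb.symm (eqProb_of_interp_dirac (psize Q) Q le_rfl hQw s hQd))
      · have hslt : P.interp s < 1 := lt_of_le_of_ne (interp_le_one hPw s) hone
        obtain ⟨P', wP', hiP, heP⟩ := extract (psize P) P le_rfl hPw s hspos hslt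
        have hQs : Q.interp s = P.interp s := by rw [← h]
        obtain ⟨Q', wQ', hiQ, heQ⟩ := extract (psize Q) Q le_rfl hQw s
          (hQs ▸ hspos) (hQs ▸ hslt)
        rw [hQs] at hiQ heQ
        have h1r : (0:ℝ) < 1 - P.interp s := by linarith
        -- interps of the residues agree
        have hres : P'.interp = Q'.interp := by
          funext t
          have e1 := congrFun hiP t
          have e2 := congrFun hiQ t
          rw [← h] at e2
          rw [e1] at e2
          have := mul_left_cancel₀ (ne_of_gt h1r) (by linarith : (1 - P.interp s) * P'.interp t = (1 - P.interp s) * Q'.interp t)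
          exact this
        -- support of the residue is strictly smaller
        have hsub : (interp_supp_finite P').toFinset ⊆ (interp_supp_finite P).toFinset.erase s := by
          intro t ht
          rw [Set.Finite.mem_toFinset, Function.mem_support] at ht
          rw [Finset.mem_erase, Set.Finite.mem_toFinset, Function.mem_support]
          constructor
          · rintro rfl
            have := congrFun hiP t
            rw [dirac_self] at this
            apply ht
            have : (1 - P.interp t) * P'.interp t = 0 := by linarith
            rcases mul_eq_zero.mp this with h' | h'
            · exfalso; exact (ne_of_gt h1r) h'
            · exact h'
          · intro hz
            have := congrFun hiP t
            have hts : t ≠ s := by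
              rintro rfl
              exact absurd hz hs
            rw [hz, dirac_ne hts] at this
            apply ht
            have : (1 - P.interp s) * P'.interp t = 0 := by linarith
            rcases mul_eq_zero.mp this with h' | h'
            · exfalso; exact (ne_of_gt h1r) h'
            · exact h'
        have hsmem : s ∈ (interp_supp_finite P).toFinset := by
          rw [Set.Finite.mem_toFinset, Function.mem_support]; exact hs
        have hcard' : (interp_supp_finite P').toFinset.card ≤ n := by
          have h1 := Finset.card_le_card hsub
          have h2 := Finset.card_erase_of_mem hsmem
          omega
        have := ih P' Q' wP' wQ' hres hcard'
        exact EqProb.trans heP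
          (EqProb.trans (EqProb.congPch _ (EqProb.refl _) this) (EqProb.symm heQ))

end Aux4

/-- Lemma 8.5: processes with identical interpretations are provably
equal from the probabilistic axioms alone. -/
theorem interp_eq_implies_eqProb (A : Type) [Fintype A] (P Q : PCSP A)
    (hPn : PNoPar P) (hQn : PNoPar Q) (hPw : PWF P) (hQw : PWF Q)
    (h : P.interp = Q.interp) : EqProb P Q :=
  main_aux (interp_supp_finite P).toFinset.card P Q hPw hQw h le_rfl

end PaperPCSP
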